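/- Let X be a topological space and let ΣX denote its (unreduced) suspension, the quotient of X × [0,1] obtained by collapsing X × {0} to one point and X × {1} to another point, equipped with the Z/2-action induced by (x,t) ↦ (x, 1−t), which interchanges the two cones. Then the effective topological complexity satisfies TC^{Z/2,∞}(ΣX) = 1; that is, for some k ≥ 1 there exists a (Z/2,k)-motion planner defined on all of ΣX × ΣX. -/

import Mathlib

open Set

/-- The space of `k`-tuples of paths in `X` that are consecutive up to the `G`-action:
the `(i+1)`-st path starts in the `G`-orbit of the endpoint of the `i`-th path. -/
def effPk (G X : Type*) [Group G] [TopologicalSpace X] [MulAction G X] (k : ℕ) :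
    Set (Fin k → C(unitInterval, X)) :=
  {γ | ∀ (i : ℕ) (h : i + 1 < k),
    γ ⟨i + 1, h⟩ 0 ∈ MulAction.orbit G (γ ⟨i, Nat.lt_of_succ_lt h⟩ 1)}

/-- A `(G,k)`-motion planner on `U ⊆ X × X`: a continuous section over `U` of the map
`π_k` sending a `k`-tuple of consecutive-up-to-`G` paths to its (start, end) pair. -/
def IsEffPlanner (G X : Type*) [Group G] [TopologicalSpace X] [MulAction G X]
    (k : ℕ) (hk : 0 < k) (U : Set (X × X)) : Prop :=
  ∃ s : U → (Fin k → C(unitInterval, X)),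
    Continuous s ∧ (∀ u, s u ∈ effPk G X k) ∧
    ∀ u : U, (s u ⟨0, hk⟩) 0 = (u : X × X).1 ∧
      (s u ⟨k - 1, Nat.sub_lt hk Nat.one_pos⟩) 1 = (u : X × X).2

/-- `TC^{G,k}(X)`: the least `ℓ ≥ 1` such that `X × X` admits an open cover by `ℓ` sets,
each admitting a `(G,k)`-motion planner; `∞` if there is no such `ℓ`. -/
noncomputable def effTC (G X : Type*) [Group G] [TopologicalSpace X] [MulAction G X]
    (k : ℕ) (hk : 0 < k) : ℕ∞ :=
  sInf {ℓ : ℕ∞ | ∃ n : ℕ, ℓ = n ∧ 1 ≤ n ∧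
    ∃ U : Fin n → Set (X × X), (∀ i, IsOpen (U i)) ∧ (⋃ i, U i) = Set.univ ∧
      ∀ i, IsEffPlanner G X k hk (U i)}

/-- Effective topological complexity `TC^{G,∞}(X)`: the minimum of `TC^{G,k}(X)` over `k ≥ 1`. -/
noncomputable def effTCinf (G X : Type*) [Group G] [TopologicalSpace X] [MulAction G X] : ℕ∞ :=
  ⨅ k : ℕ, effTC G X (k + 1) k.succ_pos

/-- Farber's (non-reduced) topological complexity `TC(X)`. -/
noncomputable def farberTC (X : Type*) [TopologicalSpace X] : ℕ∞ :=
  sInf {ℓ : ℕ∞ | ∃ n : ℕ, ℓ = n ∧ 1 ≤ n ∧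
    ∃ U : Fin n → Set (X × X), (∀ i, IsOpen (U i)) ∧ (⋃ i, U i) = Set.univ ∧
      ∀ i, ∃ s : (U i) → C(unitInterval, X), Continuous s ∧
        ∀ u : (U i), (s u) 0 = (u : X × X).1 ∧ (s u) 1 = (u : X × X).2}

/-- The action of `ℤ/2` on `X` generated by an involution `f`. -/
def involutionAction {X : Type*} (f : X → X) (hf : ∀ x, f (f x) = x) :
    MulAction (Multiplicative (ZMod 2)) X where
  smul g x := if g.toAdd = 1 then f x else x
  one_smul x := by
    show (if (Multiplicative.toAdd (1 : Multiplicative (ZMod 2))) = 1 then f x else x) = x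
    simp
  mul_smul a b x := by
    have hcases : ∀ z : ZMod 2, z = 0 ∨ z = 1 := by decide
    show (if (Multiplicative.toAdd (a * b)) = 1 then f x else x) =
      (if a.toAdd = 1 then f (if b.toAdd = 1 then f x else x) else (if b.toAdd = 1 then f x else x))
    rcases hcases a.toAdd with ha | ha <;> rcases hcases b.toAdd with hb | hb <;>
      simp [toAdd_mul, ha, hb, hf x]

/-- The identification relation of the unreduced suspension: collapse `X × {0}` to one point
and `X × {1}` to another. -/
def suspRel (X : Type*) (p q : X × unitInterval) : Prop :=
  p = q ∨ (p.2 = 0 ∧ q.2 = 0) ∨ (p.2 = 1 ∧ q.2 = 1)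

/-- The unreduced suspension `ΣX`, with the quotient topology. -/
def Susp (X : Type*) [TopologicalSpace X] : Type _ := Quot (suspRel X)

instance (X : Type*) [TopologicalSpace X] : TopologicalSpace (Susp X) :=
  instTopologicalSpaceQuot

/-- The involution of `ΣX` induced by `(x, t) ↦ (x, 1 - t)`, interchanging the two cones. -/
def suspFlip (X : Type*) [TopologicalSpace X] : Susp X → Susp X :=
  Quot.map (fun p => (p.1, unitInterval.symm p.2)) (by
    rintro p q (rfl | ⟨h0, h0'⟩ | ⟨h1, h1'⟩)
    · exact Or.inl rfl
    · exact Or.inr (Or.inr (by simp [h0, h0']))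
    · exact Or.inr (Or.inl (by simp [h1, h1'])))

lemma suspFlip_invol (X : Type*) [TopologicalSpace X] (y : Susp X) :
    suspFlip X (suspFlip X y) = y := by
  induction y using Quot.ind with
  | mk p =>
    obtain ⟨x, t⟩ := p
    show Quot.mk _ (x, unitInterval.symm (unitInterval.symm t)) = Quot.mk _ (x, t)
    rw [unitInterval.symm_symm]


/-! ### Auxiliary constructions for the suspension motion planner -/

section Planner

variable {X : Type*} [TopologicalSpace X]

/-- Point of the suspension from an `X`-coordinate and a real height (clamped to `[0,1]`). -/
noncomputable def suspMk (x : X) (r : ℝ) : Susp X :=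
  Quot.mk (suspRel X) (x, Set.projIcc (0 : ℝ) 1 zero_le_one r)

lemma continuous_suspMk : Continuous (fun p : X × ℝ => suspMk p.1 p.2) :=
  continuous_quot_mk.comp (continuous_fst.prodMk (continuous_projIcc.comp continuous_snd))

lemma suspMk_coe (x : X) (t : unitInterval) : suspMk x (t : ℝ) = Quot.mk (suspRel X) (x, t) := by
  unfold suspMk
  rw [Set.projIcc_of_mem zero_le_one t.2]

lemma suspMk_one (x y : X) : suspMk x 1 = suspMk y 1 := by
  refine Quot.sound (Or.inr (Or.inr ⟨?_, ?_⟩)) <;>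
    simp [Set.projIcc_right]

/-- The "ascend" parameter function: `psiR t s` moves from height `t` towards the north pole,
reaching it at `s = 1` as soon as `t ≥ 1/2`, while being constant for `t = 0` and `t = 1`. -/
noncomputable def psiR (t s : ℝ) : ℝ := t + s * (1 - t) * min (2 * t) 1

lemma continuous_psiR : Continuous (fun p : ℝ × ℝ => psiR p.1 p.2) := by
  unfold psiR; fun_prop

lemma psiR_zero (t : ℝ) : psiR t 0 = t := by simp [psiR]

lemma psiR_one_of_half (t : ℝ) (ht : 1/2 ≤ t) : psiR t 1 = 1 := by
  have : min (2 * t) 1 = 1 := min_eq_right (by linarith)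
  simp [psiR, this]


lemma psiR_one_left (s : ℝ) : psiR 1 s = 1 := by simp [psiR]

lemma half_le_max (t : ℝ) : 1/2 ≤ max t (1 - t) := by
  rcases le_total t (1 - t) with h | h
  · exact (by linarith : (1/2 : ℝ) ≤ 1 - t).trans (le_max_right _ _)
  · exact (by linarith : (1/2 : ℝ) ≤ t).trans (le_max_left _ _)

/-- The raw ascend map, before descending to the quotient. -/
noncomputable def ascRaw : C((X × unitInterval) × unitInterval, Susp X) :=
  ⟨fun p => suspMk p.1.1 (psiR (max (p.1.2 : ℝ) (1 - (p.1.2 : ℝ))) (p.2 : ℝ)), by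
    have h1 : Continuous (fun p : (X × unitInterval) × unitInterval =>
        (((p.1.2 : ℝ) ⊔ (1 - (p.1.2 : ℝ)), (p.2 : ℝ)) : ℝ × ℝ)) := by fun_prop
    exact continuous_suspMk.comp ((continuous_fst.comp continuous_fst).prodMk
      (continuous_psiR.comp h1))⟩

noncomputable def ascCurry : C(X × unitInterval, C(unitInterval, Susp X)) :=
  ascRaw.curry

lemma ascCurry_rel (p q : X × unitInterval) (h : suspRel X p q) : ascCurry p = ascCurry q := by
  rcases h with rfl | ⟨h0, h0'⟩ | ⟨h1, h1'⟩
  · rfl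
  · ext s
    show suspMk p.1 _ = suspMk q.1 _
    rw [h0, h0']
    have : psiR (max ((0 : unitInterval) : ℝ) (1 - ((0 : unitInterval) : ℝ))) (s : ℝ) = 1 := by
      have h : max ((0 : unitInterval) : ℝ) (1 - ((0 : unitInterval) : ℝ)) = 1 := by norm_num
      rw [h, psiR_one_left]
    rw [this]; exact suspMk_one _ _
  · ext s
    show suspMk p.1 _ = suspMk q.1 _
    rw [h1, h1']
    have : psiR (max ((1 : unitInterval) : ℝ) (1 - ((1 : unitInterval) : ℝ))) (s : ℝ) = 1 := by
      have h : max ((1 : unitInterval) : ℝ) (1 - ((1 : unitInterval) : ℝ)) = 1 := by norm_num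
      rw [h, psiR_one_left]
    rw [this]; exact suspMk_one _ _

/-- The ascend map on the suspension: starting from the "upper" representative of the orbit of
a point, go up to the north pole. -/
noncomputable def ascS : Susp X → C(unitInterval, Susp X) :=
  Quot.lift (fun p => ascCurry p) ascCurry_rel

lemma continuous_ascS : Continuous (ascS (X := X)) :=
  continuous_quot_lift _ ascCurry.continuous

lemma ascS_mk (x : X) (t : unitInterval) (s : unitInterval) :
    ascS (Quot.mk (suspRel X) (x, t)) s
      = suspMk x (psiR (max (t : ℝ) (1 - (t : ℝ))) (s : ℝ)) := rfl

lemma ascS_one (a : Susp X) (x : X) : ascS a 1 = suspMk x 1 := by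
  induction a using Quot.ind with
  | mk p =>
    obtain ⟨y, t⟩ := p
    rw [ascS_mk]
    have : psiR (max (t : ℝ) (1 - (t : ℝ))) ((1 : unitInterval) : ℝ) = 1 := by
      simpa using psiR_one_of_half _ (half_le_max (t : ℝ))
    rw [this]; exact suspMk_one _ _

/-- Uncurried, real-parameter version of the ascend map. -/
noncomputable def ascH (p : Susp X × ℝ) : Susp X :=
  ascS p.1 (Set.projIcc (0 : ℝ) 1 zero_le_one p.2)

lemma continuous_ascH : Continuous (ascH (X := X)) := by
  have h1 : Continuous (Function.uncurry fun a s => (⟨ascS, continuous_ascS⟩ :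
      C(Susp X, C(unitInterval, Susp X))) a s) :=
    ContinuousMap.continuous_uncurry_of_continuous _
  have h2 : Continuous (fun p : Susp X × ℝ =>
      ((p.1, Set.projIcc (0:ℝ) 1 zero_le_one p.2) : Susp X × unitInterval)) :=
    continuous_fst.prodMk (continuous_projIcc.comp continuous_snd)
  exact h1.comp h2

lemma ascH_zero (a : Susp X) : ascH (a, 0) = ascS a 0 := by
  unfold ascH; rw [Set.projIcc_left]; rfl

lemma ascH_one (a b : Susp X) : ascH (a, 1) = ascH (b, 1) := by
  induction a using Quot.ind with
  | mk p =>
    unfold ascH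
    rw [Set.projIcc_right]
    have h1 : ascS (Quot.mk (suspRel X) p) (⟨1, by norm_num⟩ : unitInterval) = suspMk p.1 1 :=
      ascS_one _ _
    have h2 : ascS b (⟨1, by norm_num⟩ : unitInterval) = suspMk p.1 1 := ascS_one _ _
    rw [show (⟨(1:ℝ), right_mem_Icc.2 zero_le_one⟩ : unitInterval) = ⟨1, by norm_num⟩ from rfl,
      h1, h2]

/-- The middle path of the planner: ascend from the upper representative of `a` to the north
pole, then descend to the upper representative of `b`. -/
noncomputable def midRaw : C((Susp X × Susp X) × unitInterval, Susp X) := by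
  refine ⟨fun p => if ((p.2 : ℝ)) ≤ 1/2 then ascH (p.1.1, 2 * (p.2 : ℝ))
    else ascH (p.1.2, 2 - 2 * (p.2 : ℝ)), ?_⟩
  refine Continuous.if_le ?_ ?_ (by fun_prop) continuous_const ?_
  · exact continuous_ascH.comp (by fun_prop)
  · exact continuous_ascH.comp (by fun_prop)
  · intro p hp
    have h2 : 2 * ((p.2 : unitInterval) : ℝ) = 1 := by rw [hp]; norm_num
    have h3 : 2 - 2 * ((p.2 : unitInterval) : ℝ) = 1 := by rw [hp]; norm_num
    rw [h3, h2]; exact ascH_one _ _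

noncomputable def midC : C(Susp X × Susp X, C(unitInterval, Susp X)) :=
  midRaw.curry

lemma midC_zero (a b : Susp X) : midC (a, b) 0 = ascS a 0 := by
  show (if (((0 : unitInterval) : ℝ)) ≤ 1/2 then ascH (a, 2 * ((0:unitInterval) : ℝ))
    else ascH (b, 2 - 2 * ((0:unitInterval) : ℝ))) = ascS a 0
  rw [if_pos (by norm_num)]
  simpa using ascH_zero a

lemma midC_one (a b : Susp X) : midC (a, b) 1 = ascS b 0 := by
  show (if (((1 : unitInterval) : ℝ)) ≤ 1/2 then ascH (a, 2 * ((1:unitInterval) : ℝ))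
    else ascH (b, 2 - 2 * ((1:unitInterval) : ℝ))) = ascS b 0
  rw [if_neg (by norm_num)]
  have : (2 : ℝ) - 2 * ((1:unitInterval) : ℝ) = 0 := by norm_num
  rw [this]; exact ascH_zero b

/-- The start of the middle path is in the orbit of the starting point. -/
lemma ascS_zero_cases (x : X) (t : unitInterval) :
    ascS (Quot.mk (suspRel X) (x, t)) 0 = Quot.mk (suspRel X) (x, t) ∨
    ascS (Quot.mk (suspRel X) (x, t)) 0 = suspFlip X (Quot.mk (suspRel X) (x, t)) := by
  rw [ascS_mk]
  have h0 : ((0 : unitInterval) : ℝ) = 0 := rfl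
  rw [h0, psiR_zero]
  rcases le_total (1 - (t : ℝ)) (t : ℝ) with h | h
  · left
    rw [max_eq_left h, suspMk_coe]
  · right
    rw [max_eq_right h]
    show suspMk x (1 - (t : ℝ)) = Quot.mk (suspRel X) (x, unitInterval.symm t)
    have : ((unitInterval.symm t : unitInterval) : ℝ) = 1 - (t : ℝ) := rfl
    rw [← this, suspMk_coe]

end Planner

/-- The unreduced suspension `ΣX`, with the `ℤ/2`-action interchanging the
two cones, satisfies `TC^{ℤ/2,∞}(ΣX) = 1`; in particular for some `k ≥ 1` there is a
`(ℤ/2,k)`-motion planner on all of `ΣX × ΣX`. -/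
theorem effTCinf_susp {X : Type*} [TopologicalSpace X] :
    @effTCinf (Multiplicative (ZMod 2)) (Susp X) _ _
      (involutionAction (suspFlip X) (suspFlip_invol X)) = 1 ∧
    ∃ (k : ℕ) (hk : 0 < k),
      @IsEffPlanner (Multiplicative (ZMod 2)) (Susp X) _ _
        (involutionAction (suspFlip X) (suspFlip_invol X)) k hk Set.univ := by
  classical
  letI M : MulAction (Multiplicative (ZMod 2)) (Susp X) :=
    involutionAction (suspFlip X) (suspFlip_invol X)
  have hflip_smul : ∀ a : Susp X,
      (Multiplicative.ofAdd (1 : ZMod 2)) • a = suspFlip X a := by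
    intro a
    show (if Multiplicative.toAdd (Multiplicative.ofAdd (1 : ZMod 2)) = 1
      then suspFlip X a else a) = suspFlip X a
    simp
  have hmem_flip : ∀ a : Susp X,
      suspFlip X a ∈ MulAction.orbit (Multiplicative (ZMod 2)) a := by
    intro a
    exact ⟨Multiplicative.ofAdd (1 : ZMod 2), hflip_smul a⟩
  -- the (ℤ/2, 3)-planner on all of ΣX × ΣX
  have hplanner : ∀ hk : 0 < 3, @IsEffPlanner (Multiplicative (ZMod 2)) (Susp X) _ _ M 3 hk
      Set.univ := by
    intro hk
    refine ⟨fun u => ![ContinuousMap.const' u.val.1, midC u.val, ContinuousMap.const' u.val.2],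
      ?_, ?_, ?_⟩
    · refine continuous_pi fun i => ?_
      fin_cases i
      · exact ContinuousMap.const'.continuous.comp (continuous_fst.comp continuous_subtype_val)
      · exact midC.continuous.comp continuous_subtype_val
      · exact ContinuousMap.const'.continuous.comp (continuous_snd.comp continuous_subtype_val)
    · rintro ⟨⟨a, b⟩, -⟩ i h
      have hi : i = 0 ∨ i = 1 := by omega
      rcases hi with rfl | rfl
      · show midC (a, b) 0 ∈ MulAction.orbit (Multiplicative (ZMod 2))
          ((ContinuousMap.const' a : C(unitInterval, Susp X)) 1)
        show midC (a, b) 0 ∈ MulAction.orbit (Multiplicative (ZMod 2)) a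
        rw [midC_zero]
        induction a using Quot.ind with
        | mk p =>
          obtain ⟨x, t⟩ := p
          rcases ascS_zero_cases x t with hcase | hcase
          · rw [hcase]; exact MulAction.mem_orbit_self _
          · rw [hcase]; exact hmem_flip _
      · show (ContinuousMap.const' b : C(unitInterval, Susp X)) 0 ∈
          MulAction.orbit (Multiplicative (ZMod 2)) (midC (a, b) 1)
        show b ∈ MulAction.orbit (Multiplicative (ZMod 2)) (midC (a, b) 1)
        rw [midC_one]
        induction b using Quot.ind with
        | mk p =>
          obtain ⟨y, u⟩ := p
          rcases ascS_zero_cases y u with hcase | hcase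
          · rw [hcase]; exact MulAction.mem_orbit_self _
          · rw [hcase]
            have := hmem_flip (suspFlip X (Quot.mk (suspRel X) (y, u)))
            rwa [suspFlip_invol X (Quot.mk (suspRel X) (y, u))] at this
    · rintro ⟨⟨a, b⟩, -⟩
      exact ⟨rfl, rfl⟩
  have hle : @effTCinf (Multiplicative (ZMod 2)) (Susp X) _ _ M ≤ 1 := by
    refine le_trans (iInf_le _ 2) ?_
    refine sInf_le ?_
    refine ⟨1, by norm_num, le_refl 1, fun _ => Set.univ, fun _ => isOpen_univ, ?_, ?_⟩
    · exact Set.iUnion_const _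
    · intro _
      exact hplanner _
  have hge : (1 : ℕ∞) ≤ @effTCinf (Multiplicative (ZMod 2)) (Susp X) _ _ M := by
    refine le_iInf fun k => le_sInf ?_
    rintro ℓ ⟨n, rfl, hn, -⟩
    exact_mod_cast hn
  exact ⟨le_antisymm hle hge, 3, Nat.succ_pos 2, hplanner _⟩
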